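/- Let x : ℕ → Bool. Define y : ℕ → Bool by y k = true if x k = true, or if x k = false and the cardinality of {j | j < k ∧ x j = false} is even; and y k = false otherwise. For t ≥ 1 write a t = |{k < t : x k = true}|, F_x(t) = a t / t, and F_y(t) = |{k < t : y k = true}| / t (as real numbers). Then: (1) for all t ≥ 1, |F_y(t) − (t + a t)/(2t)| ≤ 1/(2t); and (2) F_x(t) → 0 as t → ∞ if and only if F_y(t) → 1/2 as t → ∞. -/

import Mathlib

open Filter

lemma stmt12_count (x y : ℕ → Bool)
    (hy : ∀ k, y k = true ↔
      (x k = true ∨ Even (((Finset.range k).filter fun j => x j = false).card))) :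
    ∀ t, ((Finset.range t).filter fun k => y k = true).card
      = ((Finset.range t).filter fun k => x k = true).card
        + (((Finset.range t).filter fun k => x k = false).card + 1) / 2 := by
  intro t
  induction t with
  | zero => simp
  | succ n ih =>
    rw [Finset.range_add_one, Finset.filter_insert, Finset.filter_insert, Finset.filter_insert]
    by_cases hx : x n = true
    · have hyn : y n = true := (hy n).2 (Or.inl hx)
      have hxf : ¬ (x n = false) := by simp [hx]
      rw [if_pos hyn, if_pos hx, if_neg hxf,
        Finset.card_insert_of_notMem (by simp), Finset.card_insert_of_notMem (by simp)]
      omega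
    · have hxf : x n = false := by simpa using hx
      by_cases he : Even (((Finset.range n).filter fun j => x j = false).card)
      · have hyn : y n = true := (hy n).2 (Or.inr he)
        rw [if_pos hyn, if_neg hx, if_pos hxf,
          Finset.card_insert_of_notMem (by simp), Finset.card_insert_of_notMem (by simp)]
        rw [Nat.even_iff] at he
        omega
      · have hyn : ¬ (y n = true) := by
          rw [hy n]; push_neg; exact ⟨hx, he⟩
        rw [if_neg hyn, if_neg hx, if_pos hxf,
          Finset.card_insert_of_notMem (by simp)]
        rw [Nat.not_even_iff] at he
        omega

/-- asymptotic density 0 reduces to simple normality in base 2. -/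
theorem stmt_12 (x y : ℕ → Bool) (a : ℕ → ℕ) (Fx Fy : ℕ → ℝ)
    (hy : ∀ k, y k = true ↔
      (x k = true ∨ Even (((Finset.range k).filter fun j => x j = false).card)))
    (ha : ∀ t, a t = ((Finset.range t).filter fun k => x k = true).card)
    (hFx : ∀ t, Fx t = (a t : ℝ) / t)
    (hFy : ∀ t, Fy t = (((Finset.range t).filter fun k => y k = true).card : ℝ) / t) :
    (∀ t, 1 ≤ t → |Fy t - ((t : ℝ) + a t) / (2 * t)| ≤ 1 / (2 * t)) ∧
    (Tendsto Fx atTop (nhds 0) ↔ Tendsto Fy atTop (nhds (1 / 2))) := by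
  have hab : ∀ t, ((Finset.range t).filter fun k => x k = true).card
      + ((Finset.range t).filter fun k => x k = false).card = t := by
    intro t
    have h := Finset.card_filter_add_card_filter_not (s := Finset.range t)
      (p := fun k => x k = true)
    simpa [Bool.not_eq_true] using h
  have key := stmt12_count x y hy
  -- Part 1
  have part1 : ∀ t, 1 ≤ t → |Fy t - ((t : ℝ) + a t) / (2 * t)| ≤ 1 / (2 * t) := by
    intro t ht
    have htR : (0 : ℝ) < t := by exact_mod_cast ht
    set C := ((Finset.range t).filter fun k => y k = true).card with hCdef
    have h1 : t + a t ≤ 2 * C := by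
      rw [ha t]; have := key t; have := hab t; omega
    have h2 : 2 * C ≤ t + a t + 1 := by
      rw [ha t]; have := key t; have := hab t; omega
    have heq : Fy t - ((t : ℝ) + a t) / (2 * t)
        = ((2 * C : ℝ) - ((t : ℝ) + a t)) / (2 * t) := by
      rw [hFy t]
      field_simp
      ring
    rw [heq, abs_div, abs_of_pos (show (0:ℝ) < 2 * (t:ℝ) by linarith)]
    have hnum : |(2 * C : ℝ) - ((t : ℝ) + a t)| ≤ 1 := by
      rw [abs_le]
      constructor
      · have : ((t : ℝ) + a t) ≤ 2 * C := by exact_mod_cast h1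
        linarith
      · have : (2 * C : ℝ) ≤ (t : ℝ) + a t + 1 := by exact_mod_cast h2
        linarith
    gcongr
  refine ⟨part1, ?_⟩
  -- Part 2
  have hmid : ∀ t : ℕ, 1 ≤ t → ((t : ℝ) + a t) / (2 * t) = 1 / 2 + Fx t / 2 := by
    intro t ht
    have htR : (0 : ℝ) < t := by exact_mod_cast ht
    have h2t : (2:ℝ) * t ≠ 0 := by positivity
    rw [hFx t, div_eq_iff h2t]
    field_simp
  set E : ℕ → ℝ := fun t => Fy t - (1 / 2 + Fx t / 2) with hEdef
  have hE : Tendsto E atTop (nhds 0) := by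
    have hg : Tendsto (fun t : ℕ => 1 / (2 * (t : ℝ))) atTop (nhds 0) := by
      have := (tendsto_one_div_atTop_nhds_zero_nat (𝕜 := ℝ)).div_const 2
      simpa [div_div, mul_comm, div_eq_mul_inv] using this
    apply squeeze_zero_norm' ?_ hg
    filter_upwards [eventually_ge_atTop 1] with t ht
    have h := part1 t ht
    rw [hmid t ht] at h
    show ‖Fy t - (1 / 2 + Fx t / 2)‖ ≤ 1 / (2 * (t:ℝ))
    simpa [Real.norm_eq_abs] using h
  constructor
  · intro hx0
    have : Tendsto (fun t => E t + (1 / 2 + Fx t / 2)) atTop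
        (nhds (0 + (1 / 2 + 0 / 2))) :=
      hE.add (tendsto_const_nhds.add (hx0.div_const 2))
    have h2 : Tendsto Fy atTop (nhds (0 + (1 / 2 + 0 / 2))) := by
      apply this.congr
      intro t; simp [hEdef]
    convert h2 using 2
    norm_num
  · intro hy2
    have : Tendsto (fun t => 2 * (Fy t - E t - 1 / 2)) atTop
        (nhds (2 * (1 / 2 - 0 - 1 / 2))) :=
      ((hy2.sub hE).sub tendsto_const_nhds).const_mul 2
    have h2 : Tendsto Fx atTop (nhds (2 * (1 / 2 - 0 - 1 / 2))) := by
      apply this.congr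
      intro t; simp [hEdef]; ring
    convert h2 using 2
    norm_num
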